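/- Every admissible string belonging to E^k_{p,q} (k ≥ 0, p,q ≥ 1) has length exactly 2p + 2q + k - 1 and is a nondegenerate surjection onto {1,...,p+q}; hence E^k_{p,q} lies in χ(p+q) in degree p + q + k - 1. -/

import Mathlib

namespace AdmissibleStrings

/-- A row `(c, M, c+1, M, c+2, ..., M, c+t)` of an admissible table: it starts with the
current value `c` of its own increasing sequence, introduces `t` new values of that
sequence at the odd places, with the current value `M` of the other sequence serving as
the stable part at the even places.  Its length is `2t+1` (odd). -/
def rowA (c M t : ℕ) : List ℕ :=
  c :: (List.range t).flatMap fun j => [M, c + j + 1]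

/-- The concatenation of the rows below the second one: the rows alternately extend the
first increasing sequence `1, 2, ..., p` (current value `a`) and the second increasing
sequence `p+1, ..., p+q` (current value `b`), by the numbers of new values listed in
`ts`. -/
def rowsAux : ℕ → ℕ → Bool → List ℕ → List ℕ
  | _, _, _, [] => []
  | a, b, true, t :: ts => rowA a b t ++ rowsAux (a + t) b false ts
  | a, b, false, t :: ts => rowA b a t ++ rowsAux a (b + t) true ts

/-- The admissible string determined by the list `ts = (t₂, ..., t_{k+3})` of numbers of
new values introduced by the rows `2, ..., k+3` of an admissible table: row 1 is `(1)`;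
row 2 is `(p+1, 1, p+2, 1, ..., 1, p+t₂)`; the following rows alternately extend the
sequence `1, ..., p` and the sequence `p+1, ..., p+q`. -/
def admString (p : ℕ) : List ℕ → List ℕ
  | [] => [1]
  | t2 :: rest =>
      1 :: (((List.range t2).flatMap fun j => [p + j + 1, 1]).dropLast
        ++ rowsAux 1 (p + t2) true rest)

/-- The total number of new values contributed to the `a`-sequence by the rows
described by `ts`, starting with a row of kind `side`. -/
def sA : Bool → List ℕ → ℕ
  | _, [] => 0
  | true, t :: ts => t + sA false ts
  | false, _ :: ts => sA true ts

lemma sA_sum : ∀ ts : List ℕ, sA true ts + sA false ts = ts.sum := by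
  intro ts
  induction ts with
  | nil => simp [sA]
  | cons t ts ih => simp only [sA, List.sum_cons]; omega

lemma rowA_succ (c M t : ℕ) : rowA c M (t+1) = rowA c M t ++ [M, c+t+1] := by
  simp [rowA, List.range_succ]

lemma length_rowA (c M t : ℕ) : (rowA c M t).length = 2*t+1 := by
  induction t with
  | zero => simp [rowA]
  | succ t ih => rw [rowA_succ]; simp [ih]; omega

lemma mem_rowA {c M t v : ℕ} : v ∈ rowA c M t ↔ (c ≤ v ∧ v ≤ c + t) ∨ (t ≠ 0 ∧ v = M) := by
  induction t with
  | zero => simp [rowA]; omega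
  | succ t ih => rw [rowA_succ]; simp [ih]; omega

lemma chain'_rowA {c M t : ℕ} (h : ∀ j ≤ t, c + j ≠ M) (l : List ℕ)
    (hl : List.Chain' (· ≠ ·) ((c+t) :: l)) :
    List.Chain' (· ≠ ·) (M :: (rowA c M t ++ l)) := by
  induction t generalizing l with
  | zero =>
    simp only [rowA, List.range_zero, List.flatMap_nil, List.cons_append, List.nil_append]
    exact List.isChain_cons_cons.mpr ⟨(h 0 (le_refl 0)).symm, by simpa using (show List.IsChain _ _ from hl)⟩
  | succ t ih =>
    rw [rowA_succ, List.append_assoc]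
    refine ih (fun j hj => h j (by omega)) (M :: (c+t+1) :: l) ?_
    refine List.isChain_cons_cons.mpr ⟨h t (by omega), ?_⟩
    exact List.isChain_cons_cons.mpr ⟨fun e => (h (t+1) le_rfl (by omega)), hl⟩

lemma chain'_rowsAux : ∀ (ts : List ℕ) (side : Bool) (a b : ℕ), a + sA side ts < b →
    List.Chain' (· ≠ ·) ((if side then b else a) :: rowsAux a b side ts) := by
  intro ts
  induction ts with
  | nil => intro side a b _; simp [rowsAux]; exact List.isChain_singleton _
  | cons t ts ih =>
    intro side a b h
    cases side with
    | true =>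
      simp only [if_pos, rowsAux]
      refine chain'_rowA (fun j hj => ?_) _ ?_
      · simp [sA] at h; omega
      · simpa using ih false (a+t) b (by simp [sA] at h ⊢; omega)
    | false =>
      simp only [rowsAux, if_neg]
      refine chain'_rowA (fun j hj => ?_) _ ?_
      · simp [sA] at h ⊢; omega
      · simpa using ih true a (b+t) (by simp [sA] at h ⊢; omega)

lemma length_rowsAux : ∀ (ts : List ℕ) (side : Bool) (a b : ℕ),
    (rowsAux a b side ts).length = ts.length + 2 * ts.sum := by
  intro ts
  induction ts with
  | nil => intro side a b; simp [rowsAux]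
  | cons t ts ih =>
    intro side a b
    cases side <;> simp [rowsAux, length_rowA, ih] <;> omega

lemma mem_rowsAux_mp : ∀ (ts : List ℕ) (side : Bool) (a b v : ℕ),
    v ∈ rowsAux a b side ts →
    (a ≤ v ∧ v ≤ a + sA side ts) ∨ (b ≤ v ∧ v ≤ b + sA (!side) ts) := by
  intro ts
  induction ts with
  | nil => intro side a b v h; simp [rowsAux] at h
  | cons t ts ih =>
    intro side a b v h
    cases side with
    | true =>
      simp only [rowsAux, List.mem_append] at h
      rcases h with h | h
      · rcases mem_rowA.mp h with ⟨h1, h2⟩ | ⟨_, rfl⟩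
        · left; simp only [sA]; omega
        · right; simp only [sA, Bool.not_true]; omega
      · rcases ih false (a+t) b v h with ⟨h1,h2⟩ | ⟨h1,h2⟩
        · left; simp only [sA, Bool.not_false] at h2 ⊢; omega
        · right; simp only [sA, Bool.not_true, Bool.not_false] at h2 ⊢; omega
    | false =>
      simp only [rowsAux, List.mem_append] at h
      rcases h with h | h
      · rcases mem_rowA.mp h with ⟨h1, h2⟩ | ⟨_, rfl⟩
        · right; simp only [sA, Bool.not_false]; omega
        · left; simp only [sA]; omega
      · rcases ih true a (b+t) v h with ⟨h1,h2⟩ | ⟨h1,h2⟩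
        · left; simp only [sA, Bool.not_true, Bool.not_false] at h2 ⊢; omega
        · right; simp only [sA, Bool.not_true, Bool.not_false] at h2 ⊢; omega

lemma mem_rowsAux_mpr : ∀ (ts : List ℕ) (side : Bool) (a b v : ℕ),
    (a + 1 ≤ v ∧ v ≤ a + sA side ts) ∨ (b + 1 ≤ v ∧ v ≤ b + sA (!side) ts) →
    v ∈ rowsAux a b side ts := by
  intro ts
  induction ts with
  | nil => intro side a b v h; simp [sA] at h; omega
  | cons t ts ih =>
    intro side a b v h
    cases side with
    | true =>
      simp only [rowsAux, List.mem_append]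
      simp only [sA, Bool.not_true] at h
      rcases h with ⟨h1, h2⟩ | ⟨h1, h2⟩
      · by_cases hv : v ≤ a + t
        · exact Or.inl (mem_rowA.mpr (Or.inl ⟨by omega, hv⟩))
        · exact Or.inr (ih false (a+t) b v (Or.inl ⟨by omega, by omega⟩))
      · exact Or.inr (ih false (a+t) b v (Or.inr ⟨h1, h2⟩))
    | false =>
      simp only [rowsAux, List.mem_append]
      simp only [sA, Bool.not_false] at h
      rcases h with ⟨h1, h2⟩ | ⟨h1, h2⟩
      · exact Or.inr (ih true a (b+t) v (Or.inl ⟨h1, by simpa [sA] using h2⟩))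
      · by_cases hv : v ≤ b + t
        · exact Or.inl (mem_rowA.mpr (Or.inl ⟨by omega, hv⟩))
        · exact Or.inr (ih true a (b+t) v (Or.inr ⟨by omega, by simp [sA]; omega⟩))

lemma sum_sA (ts : List ℕ) :
    (∑ i ∈ Finset.range ts.length, if i % 2 = 0 then ts.getD i 0 else 0) = sA true ts ∧
    (∑ i ∈ Finset.range ts.length, if i % 2 = 1 then ts.getD i 0 else 0) = sA false ts := by
  induction ts with
  | nil => simp [sA]
  | cons t ts ih =>
    constructor
    · rw [List.length_cons, Finset.sum_range_succ']
      simp only [List.getD_cons_succ, List.getD_cons_zero, sA]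
      rw [show (∑ i ∈ Finset.range ts.length, if (i+1) % 2 = 0 then ts.getD i 0 else 0)
          = ∑ i ∈ Finset.range ts.length, if i % 2 = 1 then ts.getD i 0 else 0 by
        apply Finset.sum_congr rfl; intro i _
        congr 1; simp [Nat.succ_mod_two_eq_zero_iff]]
      rw [ih.2]; simp [Nat.add_comm]
    · rw [List.length_cons, Finset.sum_range_succ']
      simp only [List.getD_cons_succ, List.getD_cons_zero, sA]
      rw [show (∑ i ∈ Finset.range ts.length, if (i+1) % 2 = 1 then ts.getD i 0 else 0)
          = ∑ i ∈ Finset.range ts.length, if i % 2 = 0 then ts.getD i 0 else 0 by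
        apply Finset.sum_congr rfl; intro i _
        congr 1; simp [Nat.succ_mod_two_eq_one_iff]]
      rw [ih.1]; simp

/-- The second row of the table, preceded by the first row `(1)` and with its final
stable entry removed: `(1, p+1, 1, p+2, ..., 1, p+t)`. -/
def Fp (p t : ℕ) : List ℕ := (List.range t).flatMap fun j => [1, p + j + 1]

lemma Fp_succ (p t : ℕ) : Fp p (t+1) = Fp p t ++ [1, p+t+1] := by
  simp [Fp, List.range_succ]

lemma length_Fp (p t : ℕ) : (Fp p t).length = 2*t := by
  induction t with
  | zero => simp [Fp]
  | succ t ih => rw [Fp_succ]; simp [ih]; omega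

lemma mem_Fp {p t v : ℕ} : v ∈ Fp p t ↔ (t ≠ 0 ∧ v = 1) ∨ (p+1 ≤ v ∧ v ≤ p+t) := by
  induction t with
  | zero => simp [Fp]
  | succ t ih => rw [Fp_succ]; simp [ih]; omega

lemma Fp_front (p t : ℕ) : Fp p (t+1) = 1 :: (p+1) :: Fp (p+1) t := by
  induction t generalizing p with
  | zero => simp [Fp, List.range_succ]
  | succ t ih =>
    rw [Fp_succ, ih, Fp_succ]
    simp
    omega

lemma oneG (p t : ℕ) :
    1 :: ((List.range t).flatMap fun j => [p+j+1, 1]) = Fp p t ++ [1] := by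
  induction t with
  | zero => simp [Fp]
  | succ t ih =>
    rw [List.range_succ, Fp_succ]
    simp only [List.flatMap_append, List.flatMap_cons, List.flatMap_nil, List.append_nil]
    rw [← List.cons_append, ih]
    simp

lemma chain_Fp : ∀ (t p : ℕ) (l : List ℕ), 0 < p →
    List.Chain' (· ≠ ·) ((p+t) :: l) →
    List.Chain' (· ≠ ·) (Fp p t ++ l) ∧
      (t ≠ 0 → ∀ y, y ≠ 1 → List.Chain' (· ≠ ·) (y :: (Fp p t ++ l))) := by
  intro t
  induction t with
  | zero =>
    intro p l hp H
    exact ⟨by simpa [Fp] using (show List.Chain' _ l from H.tail), fun h => absurd rfl h⟩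
  | succ t ih =>
    intro p l hp H
    rw [Fp_front, List.cons_append, List.cons_append]
    have H' : List.Chain' (· ≠ ·) ((p+1+t) :: l) := by
      rw [show p+1+t = p+(t+1) by omega]; exact H
    obtain ⟨C1, C2⟩ := ih (p+1) l (by omega) H'
    have hc : List.Chain' (· ≠ ·) ((p+1) :: (Fp (p+1) t ++ l)) := by
      rcases Nat.eq_zero_or_pos t with rfl | ht
      · simpa [Fp] using H'
      · exact C2 (by omega) (p+1) (by omega)
    have hc1 : List.Chain' (· ≠ ·) (1 :: (p+1) :: (Fp (p+1) t ++ l)) :=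
      List.isChain_cons_cons.mpr ⟨by omega, hc⟩
    exact ⟨hc1, fun _ y hy => List.isChain_cons_cons.mpr ⟨hy, hc1⟩⟩

lemma admString_eq (p t : ℕ) (rest : List ℕ) (ht : t ≠ 0) :
    admString p (t :: rest) = Fp p t ++ rowsAux 1 (p + t) true rest := by
  have hG : ((List.range t).flatMap fun j => [p+j+1, 1]) ≠ [] := by
    obtain ⟨s, rfl⟩ := Nat.exists_eq_succ_of_ne_zero ht
    rw [List.range_succ]
    simp
  show 1 :: _ = _
  rw [← List.cons_append, ← List.dropLast_cons_of_ne_nil hG, oneG, List.dropLast_concat]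

/-- every admissible string belonging to `E^k_{p,q}` (i.e. coming from a
table with `k+3` rows, second row starting with `p+1`, first sequence ending at `p` and
maximal value `p+q`) has length exactly `2p + 2q + k - 1` and is a nondegenerate
surjection onto `{1, ..., p+q}`; hence `E^k_{p,q}` lies in `χ(p+q)` in degree
`p + q + k - 1`. -/
theorem stmt14 (p q k : ℕ) (hp : 1 ≤ p) (hq : 1 ≤ q) (ts : List ℕ)
    (hlen : ts.length = k + 2)
    (hhead : 1 ≤ ts.headI)
    (hlast : ts.getLast? = some 0)
    (hseq1 : ∑ i ∈ Finset.range (k + 2),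
      (if i % 2 = 1 then ts.getD i 0 else 0) = p - 1)
    (hseq2 : ∑ i ∈ Finset.range (k + 2),
      (if i % 2 = 0 then ts.getD i 0 else 0) = q) :
    (admString p ts).length = 2 * p + 2 * q + k - 1 ∧
    (admString p ts).Chain' (· ≠ ·) ∧
    (∀ v, v ∈ admString p ts ↔ 1 ≤ v ∧ v ≤ p + q) ∧
    (admString p ts).length - (p + q) = p + q + k - 1 := by
  rcases ts with _ | ⟨t2, rest⟩
  · simp at hlen
  have ht2 : 1 ≤ t2 := by simpa using hhead
  have hs1 := (sum_sA (t2 :: rest)).2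
  have hs2 := (sum_sA (t2 :: rest)).1
  rw [hlen] at hs1 hs2
  rw [hseq1] at hs1
  rw [hseq2] at hs2
  -- hs1 : p - 1 = sA false (t2 :: rest), hs2 : q = sA true (t2 :: rest)
  simp only [sA] at hs1 hs2
  -- hs1 : p - 1 = sA true rest ; hs2 : q = t2 + sA false rest
  have hX : sA true rest + 1 = p := by omega
  have hY : t2 + sA false rest = q := by omega
  have hlenr : rest.length = k + 1 := by simpa using hlen
  rw [admString_eq p t2 rest (by omega)]
  have hL : (Fp p t2 ++ rowsAux 1 (p + t2) true rest).length = 2 * p + 2 * q + k - 1 := by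
    rw [List.length_append, length_Fp, length_rowsAux]
    have hsum : sA true rest + sA false rest = rest.sum := sA_sum rest
    omega
  refine ⟨hL, ?_, ?_, by omega⟩
  · have Hrows : List.Chain' (· ≠ ·) ((p + t2) :: rowsAux 1 (p + t2) true rest) := by
      simpa using chain'_rowsAux rest true 1 (p + t2) (by omega)
    exact (chain_Fp t2 p _ (by omega) Hrows).1
  · intro v
    constructor
    · intro hv
      rcases List.mem_append.mp hv with h | h
      · rcases mem_Fp.mp h with ⟨_, rfl⟩ | ⟨h1, h2⟩ <;> omega
      · rcases mem_rowsAux_mp rest true 1 (p + t2) v h with ⟨h1, h2⟩ | ⟨h1, h2⟩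
        · omega
        · simp only [Bool.not_true] at h2; omega
    · intro hv
      rw [List.mem_append]
      by_cases hF : v = 1 ∨ (p + 1 ≤ v ∧ v ≤ p + t2)
      · exact Or.inl (mem_Fp.mpr (by omega))
      · right
        by_cases hvp : v ≤ p
        · exact mem_rowsAux_mpr rest true 1 (p + t2) v (Or.inl ⟨by omega, by omega⟩)
        · refine mem_rowsAux_mpr rest true 1 (p + t2) v (Or.inr ⟨by omega, ?_⟩)
          first
          | omega
          | (simp only [Bool.not_true]; omega)


end AdmissibleStrings
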